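/- arXiv:2108.08779 — 5 statements merged into one kernel-verified Lean document; each statement's English description precedes it below -/
import Mathlib

section
/- Fix integers n ≥ 1 and m ≥ 0. Define a graph G whose vertices are non-decreasing n-tuples of integers (d_1 ≤ ... ≤ d_n), with an edge from (d_1,...,d_n) to (d'_1,...,d'_n) whenever there exists a permutation σ ≠ Id in S(n) and integers c_{a,b} ≥ -m (for each pair a < b with σ(a) > σ(b)) such that d'_a = d_{σ(a)} - Σ_{s< a, σ(s)>σ(a)} c_{s,a} + Σ_{a<t, σ(a)>σ(t)} c_{a,t} for all a. Then every connected component of G is finite. -/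
/-- The edge relation of the graph `G`: `d → d'` whenever there is a nontrivial
permutation `σ` and integers `c_{a,b} ≥ -m` (for pairs `a < b` with `σ a > σ b`) with
`d'_a = d_{σ(a)} - Σ_{s<a, σ(s)>σ(a)} c_{s,a} + Σ_{a<t, σ(a)>σ(t)} c_{a,t}`. -/
def GEdge (n m : ℕ) (d d' : Fin n → ℤ) : Prop :=
  ∃ σ : Equiv.Perm (Fin n), σ ≠ 1 ∧ ∃ c : Fin n → Fin n → ℤ,
    (∀ a b : Fin n, -(m : ℤ) ≤ c a b) ∧
    ∀ a : Fin n, d' a = d (σ a)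
      - ∑ s ∈ Finset.univ.filter (fun s : Fin n => s < a ∧ σ a < σ s), c s a
      + ∑ t ∈ Finset.univ.filter (fun t : Fin n => a < t ∧ σ t < σ a), c a t

def Pp (n : ℕ) (d : Fin n → ℤ) (k : ℕ) : ℤ := ∑ a : Fin n, if (a : ℕ) < k then d a else 0



lemma Pp_succ (n : ℕ) (d : Fin n → ℤ) (j : ℕ) (hj : j < n) :
    Pp n d (j+1) = Pp n d j + d ⟨j, hj⟩ := by
  unfold Pp
  have : ∀ a : Fin n, (if (a : ℕ) < j+1 then d a else 0)
      = (if (a : ℕ) < j then d a else 0) + (if a = ⟨j, hj⟩ then d a else 0) := by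
    intro a
    rcases lt_trichotomy (a : ℕ) j with h | h | h
    · have h1 : (a:ℕ) < j + 1 := by omega
      have h2 : a ≠ ⟨j, hj⟩ := by intro e; rw [e] at h; simp at h
      simp [h, h1, h2]
    · have h2 : a = ⟨j, hj⟩ := by apply Fin.ext; simpa using h
      simp [h2, h]
    · have h1 : ¬ ((a:ℕ) < j + 1) := by omega
      have h2 : a ≠ ⟨j, hj⟩ := by intro e; rw [e] at h; simp at h
      simp [h1, h2, Nat.lt_asymm h]
  rw [Finset.sum_congr rfl (fun a _ => this a), Finset.sum_add_distrib]
  simp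

lemma card_A (n k : ℕ) (hk : k ≤ n) :
    (Finset.univ.filter (fun a : Fin n => (a : ℕ) < k)).card = k := by
  have himg : (Finset.univ.filter (fun a : Fin n => (a : ℕ) < k)).image Fin.val
      = Finset.range k := by
    ext j
    simp only [Finset.mem_image, Finset.mem_filter, Finset.mem_univ, true_and, Finset.mem_range]
    constructor
    · rintro ⟨a, ha, rfl⟩; exact ha
    · intro hj; exact ⟨⟨j, lt_of_lt_of_le hj hk⟩, hj, rfl⟩
  have := Finset.card_image_of_injective
    (Finset.univ.filter (fun a : Fin n => (a : ℕ) < k)) (Fin.val_injective)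
  rw [himg] at this
  simpa using this.symm

lemma Pp_upper {n : ℕ} {d : Fin n → ℤ} (hd : Monotone d) (k : ℕ) (hk : k ≤ n) :
    (n : ℤ) * Pp n d k ≤ (k : ℤ) * Pp n d n := by
  classical
  set A := Finset.univ.filter (fun a : Fin n => (a : ℕ) < k) with hA
  set B := Finset.univ.filter (fun a : Fin n => ¬ ((a : ℕ) < k)) with hB
  have hPk : Pp n d k = ∑ a ∈ A, d a := (Finset.sum_filter _ _).symm
  have hPn : Pp n d n = ∑ a ∈ A, d a + ∑ a ∈ B, d a := by
    rw [hA, hB, Finset.sum_filter_add_sum_filter_not]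
    unfold Pp
    exact Finset.sum_congr rfl (fun a _ => by simp [a.isLt])
  have hcardA : A.card = k := card_A n k hk
  have hcardB : B.card = n - k := by
    have := Finset.card_filter_add_card_filter_not
      (s := (Finset.univ : Finset (Fin n))) (p := fun a : Fin n => (a : ℕ) < k)
    rw [← hA, ← hB] at this
    simp only [Finset.card_univ, Fintype.card_fin] at this
    omega
  have hmain : ∑ a ∈ A, ∑ _b ∈ B, d a ≤ ∑ a ∈ A, ∑ b ∈ B, d b := by
    apply Finset.sum_le_sum
    intro a ha
    apply Finset.sum_le_sum
    intro b hb
    apply hd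
    have ha' : (a : ℕ) < k := by simpa [hA] using ha
    have hb' : ¬ ((b : ℕ) < k) := by simpa [hB] using hb
    exact Fin.le_def.mpr (by omega)
  simp only [Finset.sum_const, hcardB, hcardA, nsmul_eq_mul, ← Finset.sum_mul] at hmain
  rw [← Finset.mul_sum] at hmain
  have hcast : ((n - k : ℕ) : ℤ) = (n : ℤ) - k := by push_cast [hk]; ring
  rw [hPk, hPn]
  rw [hcast] at hmain
  nlinarith [hmain]


section Edge

variable {n m : ℕ} {d d' : Fin n → ℤ} (σ : Equiv.Perm (Fin n)) (c : Fin n → Fin n → ℤ)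

lemma F1
    (heq : ∀ a : Fin n, d' a = d (σ a)
      - ∑ s ∈ Finset.univ.filter (fun s : Fin n => s < a ∧ σ a < σ s), c s a
      + ∑ t ∈ Finset.univ.filter (fun t : Fin n => a < t ∧ σ t < σ a), c a t) (k : ℕ) :
    Pp n d' k = (∑ a : Fin n, if (a : ℕ) < k then d (σ a) else 0)
      + ∑ x : Fin n, ∑ y : Fin n,
          if ((x : ℕ) < k ∧ ¬ ((y : ℕ) < k) ∧ σ y < σ x) then c x y else 0 := by
  classical
  have hsplit : Pp n d' k
      = (∑ a : Fin n, if (a : ℕ) < k then d (σ a) else 0)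
      - (∑ a : Fin n, ∑ s : Fin n,
          if ((a : ℕ) < k ∧ (s < a ∧ σ a < σ s)) then c s a else 0)
      + (∑ a : Fin n, ∑ t : Fin n,
          if ((a : ℕ) < k ∧ (a < t ∧ σ t < σ a)) then c a t else 0) := by
    have point : ∀ a : Fin n, (if (a : ℕ) < k then d' a else 0)
        = (if (a : ℕ) < k then d (σ a) else 0)
        - (∑ s : Fin n, if ((a : ℕ) < k ∧ (s < a ∧ σ a < σ s)) then c s a else 0)
        + (∑ t : Fin n, if ((a : ℕ) < k ∧ (a < t ∧ σ t < σ a)) then c a t else 0) := by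
      intro a
      rw [heq a, Finset.sum_filter, Finset.sum_filter]
      by_cases h : (a : ℕ) < k
      · simp [h]
      · simp [h]
    unfold Pp
    rw [Finset.sum_congr rfl (fun a _ => point a), Finset.sum_add_distrib,
      Finset.sum_sub_distrib]
  have hD1 : (∑ a : Fin n, ∑ s : Fin n,
        if ((a : ℕ) < k ∧ (s < a ∧ σ a < σ s)) then c s a else 0)
      = ∑ x : Fin n, ∑ y : Fin n,
        if ((y : ℕ) < k ∧ (x < y ∧ σ y < σ x)) then c x y else 0 :=
    Finset.sum_comm
  rw [hsplit, hD1, sub_add_comm, add_comm]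
  congr 1
  rw [← Finset.sum_sub_distrib]
  apply Finset.sum_congr rfl
  intro x _
  rw [← Finset.sum_sub_distrib]
  apply Finset.sum_congr rfl
  intro y _
  by_cases hx : (x : ℕ) < k <;> by_cases hy : (y : ℕ) < k
  · simp [hx, hy]
  · have hxy : x < y := by rw [Fin.lt_def]; omega
    simp [hx, hy, hxy]
  · have hxy : ¬ (x < y) := by rw [Fin.lt_def]; omega
    simp [hx, hy, hxy]
  · simp [hx, hy]

lemma edge_preserve
    (heq : ∀ a : Fin n, d' a = d (σ a)
      - ∑ s ∈ Finset.univ.filter (fun s : Fin n => s < a ∧ σ a < σ s), c s a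
      + ∑ t ∈ Finset.univ.filter (fun t : Fin n => a < t ∧ σ t < σ a), c a t)
    (k : ℕ) (hpres : ∀ a : Fin n, (a : ℕ) < k → ((σ a : Fin n) : ℕ) < k) :
    Pp n d' k = Pp n d k := by
  classical
  set A := Finset.univ.filter (fun a : Fin n => (a : ℕ) < k) with hA
  have hmemA : ∀ a : Fin n, a ∈ A ↔ (a : ℕ) < k := by
    intro a; simp [hA]
  have hsub : A.image σ ⊆ A := by
    intro b hb
    obtain ⟨a, ha, rfl⟩ := Finset.mem_image.mp hb
    exact (hmemA _).mpr (hpres a ((hmemA _).mp ha))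
  have himg : A.image σ = A :=
    Finset.eq_of_subset_of_card_le hsub
      (le_of_eq (Finset.card_image_of_injective A σ.injective).symm)
  have hcompl : ∀ y : Fin n, ¬ ((y : ℕ) < k) → ¬ (((σ y : Fin n) : ℕ) < k) := by
    intro y hy hσy
    have : σ y ∈ A := (hmemA _).mpr hσy
    rw [← himg] at this
    obtain ⟨a, ha, hae⟩ := Finset.mem_image.mp this
    exact hy ((hmemA _).mp (σ.injective hae ▸ ha))
  rw [F1 σ c heq k]
  have hzero : (∑ x : Fin n, ∑ y : Fin n,
      if ((x : ℕ) < k ∧ ¬ ((y : ℕ) < k) ∧ σ y < σ x) then c x y else 0) = 0 := by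
    apply Finset.sum_eq_zero
    intro x _
    apply Finset.sum_eq_zero
    intro y _
    rw [if_neg]
    rintro ⟨hx, hy, hlt⟩
    have h1 : ((σ x : Fin n) : ℕ) < k := hpres x hx
    have h2 : ¬ (((σ y : Fin n) : ℕ) < k) := hcompl y hy
    rw [Fin.lt_def] at hlt
    omega
  rw [hzero, add_zero]
  have : (∑ a : Fin n, if (a : ℕ) < k then d (σ a) else 0) = ∑ a ∈ A, d (σ a) := by
    rw [hA, Finset.sum_filter]
  rw [this, ← Finset.sum_image (fun a _ b _ h => σ.injective h), himg, Pp, Finset.sum_filter]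

lemma edge_gain (hd : Monotone d)
    (hc : ∀ a b : Fin n, -(m : ℤ) ≤ c a b)
    (heq : ∀ a : Fin n, d' a = d (σ a)
      - ∑ s ∈ Finset.univ.filter (fun s : Fin n => s < a ∧ σ a < σ s), c s a
      + ∑ t ∈ Finset.univ.filter (fun t : Fin n => a < t ∧ σ t < σ a), c a t)
    (j : ℕ) (hj : j + 1 < n)
    (hnp : ¬ ∀ a : Fin n, (a : ℕ) < j+1 → ((σ a : Fin n) : ℕ) < j+1) :
    Pp n d (j+1) + (d ⟨j+1, hj⟩ - d ⟨j, Nat.lt_of_succ_lt hj⟩) - (m : ℤ) * n * n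
      ≤ Pp n d' (j+1) := by
  classical
  set k := j + 1 with hk
  set A := Finset.univ.filter (fun a : Fin n => (a : ℕ) < k) with hA
  have hmemA : ∀ a : Fin n, a ∈ A ↔ (a : ℕ) < k := by
    intro a; simp [hA]
  set T := A.image σ with hT
  have hcardT : T.card = A.card := Finset.card_image_of_injective A σ.injective
  have hcard_sdiff : (T \ A).card = (A \ T).card := Finset.card_sdiff_comm hcardT
  have hne : (T \ A).Nonempty := by
    push_neg at hnp
    obtain ⟨a, ha, hna⟩ := hnp
    refine ⟨σ a, Finset.mem_sdiff.mpr ⟨Finset.mem_image_of_mem σ ((hmemA _).mpr ha), ?_⟩⟩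
    intro h
    have := (hmemA _).mp h
    omega
  have hlow : ∀ b ∈ T \ A, d ⟨j+1, hj⟩ ≤ d b := by
    intro b hb
    have : ¬ ((b : ℕ) < k) := fun h => (Finset.mem_sdiff.mp hb).2 ((hmemA _).mpr h)
    apply hd
    rw [Fin.le_def]
    simp only [Fin.val_mk]
    omega
  have hhigh : ∀ b ∈ A \ T, d b ≤ d ⟨j, Nat.lt_of_succ_lt hj⟩ := by
    intro b hb
    have : (b : ℕ) < k := (hmemA _).mp (Finset.mem_sdiff.mp hb).1
    apply hd
    rw [Fin.le_def]
    simp only [Fin.val_mk]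
    omega
  have hsum1 : (T \ A).card • d ⟨j+1, hj⟩ ≤ ∑ b ∈ T \ A, d b :=
    Finset.card_nsmul_le_sum _ _ _ hlow
  have hsum2 : ∑ b ∈ A \ T, d b ≤ (A \ T).card • d ⟨j, Nat.lt_of_succ_lt hj⟩ :=
    Finset.sum_le_card_nsmul _ _ _ hhigh
  have hT_split : ∑ b ∈ T ∩ A, d b + ∑ b ∈ T \ A, d b = ∑ b ∈ T, d b :=
    Finset.sum_inter_add_sum_sdiff T A d
  have hA_split : ∑ b ∈ A ∩ T, d b + ∑ b ∈ A \ T, d b = ∑ b ∈ A, d b :=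
    Finset.sum_inter_add_sum_sdiff A T d
  have hinter : T ∩ A = A ∩ T := Finset.inter_comm T A
  have hgap : (0 : ℤ) ≤ d ⟨j+1, hj⟩ - d ⟨j, Nat.lt_of_succ_lt hj⟩ := by
    have := hd (show (⟨j, Nat.lt_of_succ_lt hj⟩ : Fin n) ≤ ⟨j+1, hj⟩ by
      rw [Fin.le_def]; simp)
    omega
  have hr1 : 1 ≤ (T \ A).card := Finset.card_pos.mpr hne
  have hmain : ∑ b ∈ A, d b + (d ⟨j+1, hj⟩ - d ⟨j, Nat.lt_of_succ_lt hj⟩) ≤ ∑ b ∈ T, d b := by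
    rw [← hT_split, ← hA_split, hinter]
    have e1 : ((T \ A).card : ℤ) * d ⟨j+1, hj⟩ ≤ ∑ b ∈ T \ A, d b := by
      simpa [nsmul_eq_mul] using hsum1
    have e2 : ∑ b ∈ A \ T, d b ≤ ((T \ A).card : ℤ) * d ⟨j, Nat.lt_of_succ_lt hj⟩ := by
      rw [hcard_sdiff]; simpa [nsmul_eq_mul] using hsum2
    have hrc : (1 : ℤ) ≤ ((T \ A).card : ℤ) := by exact_mod_cast hr1
    nlinarith [e1, e2, hgap, hrc]
  -- crossing sum lower bound
  rw [F1 σ c heq k]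
  have hcross : -((m : ℤ) * n * n) ≤ ∑ x : Fin n, ∑ y : Fin n,
      if ((x : ℕ) < k ∧ ¬ ((y : ℕ) < k) ∧ σ y < σ x) then c x y else 0 := by
    have h1 : ∀ x : Fin n, -((m : ℤ) * n) ≤ ∑ y : Fin n,
        if ((x : ℕ) < k ∧ ¬ ((y : ℕ) < k) ∧ σ y < σ x) then c x y else 0 := by
      intro x
      have : ∀ y : Fin n, -(m : ℤ) ≤
          (if ((x : ℕ) < k ∧ ¬ ((y : ℕ) < k) ∧ σ y < σ x) then c x y else 0) := by
        intro y
        split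
        · exact hc x y
        · simp
      calc -((m : ℤ) * n) = Finset.univ.card • (-(m : ℤ)) := by
            simp [nsmul_eq_mul]; ring
        _ ≤ _ := Finset.card_nsmul_le_sum _ _ _ (fun y _ => this y)
    calc -((m : ℤ) * n * n) = Finset.univ.card • (-((m : ℤ) * n)) := by
          simp [nsmul_eq_mul]; ring
      _ ≤ _ := Finset.card_nsmul_le_sum _ _ _ (fun x _ => h1 x)
  have hfirst : (∑ a : Fin n, if (a : ℕ) < k then d (σ a) else 0) = ∑ b ∈ T, d b := by
    rw [hT, Finset.sum_image (fun a _ b _ h => σ.injective h), hA, Finset.sum_filter]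
  have hPp : Pp n d k = ∑ b ∈ A, d b := by rw [Pp, hA, Finset.sum_filter]
  rw [hfirst, hPp]
  omega

end Edge

section S
variable {n m : ℕ} {d d' : Fin n → ℤ}

lemma GEdge_symm_aux (σ : Equiv.Perm (Fin n))
    (c : Fin n → Fin n → ℤ) (hc : ∀ a b : Fin n, -(m : ℤ) ≤ c a b)
    (heq : ∀ a : Fin n, d' a = d (σ a)
      - ∑ s ∈ Finset.univ.filter (fun s : Fin n => s < a ∧ σ a < σ s), c s a
      + ∑ t ∈ Finset.univ.filter (fun t : Fin n => a < t ∧ σ t < σ a), c a t) :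
    ∃ c' : Fin n → Fin n → ℤ, (∀ a b : Fin n, -(m : ℤ) ≤ c' a b) ∧
    ∀ a : Fin n, d a = d' (σ⁻¹ a)
      - ∑ s ∈ Finset.univ.filter (fun s : Fin n => s < a ∧ σ⁻¹ a < σ⁻¹ s), c' s a
      + ∑ t ∈ Finset.univ.filter (fun t : Fin n => a < t ∧ σ⁻¹ t < σ⁻¹ a), c' a t := by
  classical
  refine ⟨fun a b => c (σ⁻¹ b) (σ⁻¹ a), fun a b => hc _ _, fun a => ?_⟩
  simp only []
  have h0 := heq (σ⁻¹ a)
  rw [show σ (σ⁻¹ a) = a from σ.apply_symm_apply a] at h0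
  have h1 : ∑ s ∈ Finset.univ.filter (fun s : Fin n => s < a ∧ σ⁻¹ a < σ⁻¹ s),
        c (σ⁻¹ a) (σ⁻¹ s)
      = ∑ t ∈ Finset.univ.filter (fun t : Fin n => σ⁻¹ a < t ∧ σ t < a), c (σ⁻¹ a) t := by
    apply Finset.sum_equiv (σ⁻¹ : Fin n ≃ Fin n)
    · intro i
      simp only [Finset.mem_filter, Finset.mem_univ, true_and]
      constructor
      · rintro ⟨h1, h2⟩; exact ⟨h2, by simpa using h1⟩
      · rintro ⟨h1, h2⟩; exact ⟨by simpa using h2, h1⟩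
    · intro i _; rfl
  have h2 : ∑ t ∈ Finset.univ.filter (fun t : Fin n => a < t ∧ σ⁻¹ t < σ⁻¹ a),
        c (σ⁻¹ t) (σ⁻¹ a)
      = ∑ s ∈ Finset.univ.filter (fun s : Fin n => s < σ⁻¹ a ∧ a < σ s), c s (σ⁻¹ a) := by
    apply Finset.sum_equiv (σ⁻¹ : Fin n ≃ Fin n)
    · intro i
      simp only [Finset.mem_filter, Finset.mem_univ, true_and]
      constructor
      · rintro ⟨h1, h2⟩; exact ⟨h2, by simpa using h1⟩
      · rintro ⟨h1, h2⟩; exact ⟨by simpa using h2, h1⟩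
    · intro i _; rfl
  rw [h1, h2]
  linarith [h0]

lemma preserve_inv (σ : Equiv.Perm (Fin n)) (k : ℕ)
    (h : ∀ a : Fin n, (a : ℕ) < k → ((σ⁻¹ a : Fin n) : ℕ) < k) :
    ∀ a : Fin n, (a : ℕ) < k → ((σ a : Fin n) : ℕ) < k := by
  classical
  set A := Finset.univ.filter (fun a : Fin n => (a : ℕ) < k) with hA
  have hmemA : ∀ a : Fin n, a ∈ A ↔ (a : ℕ) < k := by intro a; simp [hA]
  have hsub : A.image (σ⁻¹ : Equiv.Perm (Fin n)) ⊆ A := by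
    intro b hb
    obtain ⟨a, ha, rfl⟩ := Finset.mem_image.mp hb
    exact (hmemA _).mpr (h a ((hmemA _).mp ha))
  have himg : A.image (σ⁻¹ : Equiv.Perm (Fin n)) = A :=
    Finset.eq_of_subset_of_card_le hsub
      (le_of_eq (Finset.card_image_of_injective A (σ⁻¹ : Equiv.Perm (Fin n)).injective).symm)
  intro a ha
  have : a ∈ A := (hmemA _).mpr ha
  rw [← himg] at this
  obtain ⟨b, hb, hbe⟩ := Finset.mem_image.mp this
  have : σ a = b := by rw [← hbe]; simp
  rw [this]
  exact (hmemA _).mp hb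

end S

section KeyLemmas

variable {n m : ℕ} {d d' : Fin n → ℤ}

lemma key (hd : Monotone d) (hd' : Monotone d')
    (σ : Equiv.Perm (Fin n)) (c : Fin n → Fin n → ℤ)
    (hc : ∀ a b : Fin n, -(m : ℤ) ≤ c a b)
    (heq : ∀ a : Fin n, d' a = d (σ a)
      - ∑ s ∈ Finset.univ.filter (fun s : Fin n => s < a ∧ σ a < σ s), c s a
      + ∑ t ∈ Finset.univ.filter (fun t : Fin n => a < t ∧ σ t < σ a), c a t)
    (j : ℕ) (hj : j + 1 < n) :
    Pp n d' (j+1) = Pp n d (j+1) ∨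
      Pp n d' (j+2) + Pp n d' j ≤ 2 * Pp n d' (j+1) + 2 * ((m : ℤ) * n * n) := by
  by_cases hp : ∀ a : Fin n, (a : ℕ) < j+1 → ((σ a : Fin n) : ℕ) < j+1
  · exact Or.inl (edge_preserve σ c heq (j+1) hp)
  · right
    have hnp' : ¬ ∀ a : Fin n, (a : ℕ) < j+1 → ((σ⁻¹ a : Fin n) : ℕ) < j+1 :=
      fun h => hp (preserve_inv σ (j+1) h)
    have g1 := edge_gain σ c hd hc heq j hj hp
    obtain ⟨c', hc', heq'⟩ := GEdge_symm_aux σ c hc heq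
    have g2 := edge_gain σ⁻¹ c' hd' hc' heq' j hj hnp'
    have e1 : Pp n d' (j+2) = Pp n d' (j+1) + d' ⟨j+1, hj⟩ := Pp_succ n d' (j+1) hj
    have e2 : Pp n d' (j+1) = Pp n d' j + d' ⟨j, Nat.lt_of_succ_lt hj⟩ :=
      Pp_succ n d' j (Nat.lt_of_succ_lt hj)
    have hgap : (0 : ℤ) ≤ d ⟨j+1, hj⟩ - d ⟨j, Nat.lt_of_succ_lt hj⟩ := by
      have := hd (show (⟨j, Nat.lt_of_succ_lt hj⟩ : Fin n) ≤ ⟨j+1, hj⟩ by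
        rw [Fin.le_def]; simp)
      omega
    linarith [g1, g2, hgap]

def minh (n m : ℕ) (d : Fin n → ℤ) : ℤ :=
  (Finset.range (n+1)).inf' (by simp) (fun k => Pp n d k - (m : ℤ) * n * n * (k : ℤ)^2)

lemma minh_le (d : Fin n → ℤ) (k : ℕ) (hk : k ≤ n) :
    minh n m d ≤ Pp n d k - (m : ℤ) * n * n * (k : ℤ)^2 :=
  Finset.inf'_le _ (Finset.mem_range.mpr (by omega))

lemma minh_mono (hd : Monotone d) (hd' : Monotone d')
    (he : GEdge n m d d') : minh n m d ≤ minh n m d' := by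
  classical
  obtain ⟨σ, hσ, c, hc, heq⟩ := he
  set A := (m : ℤ) * n * n with hAdef
  set h' : ℕ → ℤ := fun k => Pp n d' k - A * (k : ℤ)^2 with hh'
  have hex : ∃ k, k ≤ n ∧ h' k = minh n m d' := by
    obtain ⟨i, hi, hieq⟩ := Finset.exists_mem_eq_inf' (s := Finset.range (n+1))
      (by simp) (fun k => Pp n d' k - A * (k : ℤ)^2)
    exact ⟨i, by { have := Finset.mem_range.mp hi; omega }, hieq.symm⟩
  obtain ⟨hk0n, hk0eq⟩ := Nat.find_spec hex
  have hattain : ∀ j ≤ n, minh n m d' ≤ h' j := by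
    intro j hjn
    exact Finset.inf'_le _ (Finset.mem_range.mpr (by omega))
  rcases Nat.eq_zero_or_pos (Nat.find hex) with h0 | hpos
  · rw [h0] at hk0eq
    rw [← hk0eq]
    calc minh n m d ≤ Pp n d 0 - A * (0:ℤ)^2 := minh_le d 0 (by omega)
      _ = h' 0 := by simp [hh', Pp]
  · rcases eq_or_lt_of_le hk0n with hn | hlt
    · rw [hn] at hk0eq
      rw [← hk0eq]
      have hPn : Pp n d' n = Pp n d n := edge_preserve σ c heq n (fun a _ => (σ a).isLt)
      calc minh n m d ≤ Pp n d n - A * (n:ℤ)^2 := minh_le d n le_rfl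
        _ = h' n := by rw [hh']; simp [hPn]
    · obtain ⟨j, hjdef⟩ : ∃ j, Nat.find hex = j + 1 := ⟨Nat.find hex - 1, by omega⟩
      rw [hjdef] at hk0eq hlt
      have hjn : j + 1 < n := hlt
      rcases key hd hd' σ c hc heq j hjn with hcase | hcase
      · rw [← hk0eq]
        calc minh n m d ≤ Pp n d (j+1) - A * ((j+1 : ℕ):ℤ)^2 := minh_le d (j+1) (by omega)
          _ = h' (j+1) := by rw [hh']; simp [hcase]
      · exfalso
        have hj2 : minh n m d' ≤ h' (j+2) := hattain (j+2) (by omega)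
        have hjj : minh n m d' ≤ h' j := hattain j (by omega)
        have hsq : ((j+2:ℕ):ℤ)^2 + ((j:ℕ):ℤ)^2 = 2*((j+1:ℕ):ℤ)^2 + 2 := by push_cast; ring
        have hA0 : 0 ≤ A := by positivity
        have hkey2 : h' (j+2) + h' j ≤ 2 * h' (j+1) := by
          rw [hh']
          simp only []
          nlinarith [hcase, hsq, hA0]
        have hjlt : h' j = minh n m d' := by
          nlinarith [hj2, hjj, hkey2, hk0eq]
        exact Nat.find_min hex (m := j) (by omega) ⟨by omega, hjlt⟩

end KeyLemmas

lemma GEdge.symm {n m : ℕ} {d d' : Fin n → ℤ} (h : GEdge n m d d') : GEdge n m d' d := by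
  obtain ⟨σ, hσ, c, hc, heq⟩ := h
  obtain ⟨c', hc', heq'⟩ := GEdge_symm_aux σ c hc heq
  exact ⟨σ⁻¹, by simpa using hσ, c', hc', heq'⟩

lemma sum_inv {n m : ℕ} {d d' : Fin n → ℤ} (he : GEdge n m d d') :
    Pp n d' n = Pp n d n := by
  obtain ⟨σ, hσ, c, hc, heq⟩ := he
  exact edge_preserve σ c heq n (fun a _ => (σ a).isLt)

/-- Every connected component of the graph `G` on non-decreasing `n`-tuples of
integers is finite. -/
theorem stmt1 (n m : ℕ) (v : {d : Fin n → ℤ // Monotone d}) :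
    {w : {d : Fin n → ℤ // Monotone d} |
      Relation.ReflTransGen
        (fun x y => GEdge n m x.1 y.1 ∨ GEdge n m y.1 x.1) v w}.Finite := by
  classical
  have hreach : ∀ w : {d : Fin n → ℤ // Monotone d},
      Relation.ReflTransGen
        (fun x y => GEdge n m x.1 y.1 ∨ GEdge n m y.1 x.1) v w →
      minh n m v.1 ≤ minh n m w.1 ∧ Pp n w.1 n = Pp n v.1 n := by
    intro w h
    induction h with
    | refl => exact ⟨le_rfl, rfl⟩
    | @tail b c hab hbc ih =>
      have hedge : GEdge n m b.1 c.1 := by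
        rcases hbc with h | h
        · exact h
        · exact h.symm
      exact ⟨le_trans ih.1 (minh_mono b.2 c.2 hedge), by rw [sum_inv hedge, ih.2]⟩
  set S := Pp n v.1 n with hS
  set μ := minh n m v.1 with hμ
  set lo := μ - |S| with hlo
  set hi := |S| - μ with hhi
  have hbound : ∀ w : {d : Fin n → ℤ // Monotone d},
      Relation.ReflTransGen
        (fun x y => GEdge n m x.1 y.1 ∨ GEdge n m y.1 x.1) v w →
      ∀ a : Fin n, w.1 a ∈ Set.Icc lo hi := by
    intro w hw a
    obtain ⟨hmin, hsum⟩ := hreach w hw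
    have hAnn : (0:ℤ) ≤ (m : ℤ) * n * n := by positivity
    have hPlow : ∀ k, k ≤ n → μ ≤ Pp n w.1 k := by
      intro k hk
      have h1 := minh_le (m := m) w.1 k hk
      have h2 : (0:ℤ) ≤ (m : ℤ) * n * n * (k:ℤ)^2 := by positivity
      have := le_trans hmin h1
      omega
    have hPhigh : ∀ k, k ≤ n → Pp n w.1 k ≤ |S| := by
      intro k hk
      have h1 := Pp_upper w.2 k hk
      rw [hsum] at h1
      have h2 : (k:ℤ) * S ≤ (n:ℤ) * |S| := by
        have := le_abs_self S
        have := neg_abs_le S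
        have hk' : (k:ℤ) ≤ n := by exact_mod_cast hk
        have h0 : (0:ℤ) ≤ k := by positivity
        nlinarith [abs_nonneg S]
      have hn0 : (0:ℤ) < n := by
        have := a.pos
        exact_mod_cast this
      nlinarith [h1, h2]
    have hsucc : Pp n w.1 ((a : ℕ) + 1) = Pp n w.1 (a : ℕ) + w.1 a := by
      have := Pp_succ n w.1 (a : ℕ) a.isLt
      simpa using this
    have h1 : μ ≤ Pp n w.1 ((a:ℕ)+1) := hPlow _ a.isLt
    have h2 : Pp n w.1 ((a:ℕ)+1) ≤ |S| := hPhigh _ a.isLt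
    have h3 : μ ≤ Pp n w.1 (a:ℕ) := hPlow _ (le_of_lt a.isLt)
    have h4 : Pp n w.1 (a:ℕ) ≤ |S| := hPhigh _ (le_of_lt a.isLt)
    constructor
    · rw [hlo]; omega
    · rw [hhi]; omega
  have hpi : (Set.univ.pi (fun _ : Fin n => Set.Icc lo hi)).Finite :=
    Set.Finite.pi (fun _ => Set.finite_Icc _ _)
  have hpre : ((Subtype.val : {d : Fin n → ℤ // Monotone d} → (Fin n → ℤ)) ⁻¹'
      (Set.univ.pi (fun _ : Fin n => Set.Icc lo hi))).Finite :=
    Set.Finite.preimage Subtype.val_injective.injOn hpi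
  apply Set.Finite.subset hpre
  intro w hw
  simp only [Set.mem_preimage, Set.mem_pi, Set.mem_univ, forall_true_left]
  exact fun a => hbound w hw a
end

section
/- Suppose (d_1 ≤ ... ≤ d_n) and (d'_1 ≤ ... ≤ d'_n) are joined by an edge of G given by permutation σ and coefficients c_{a,b} ≥ -m. If for some k ∈ {1,...,n-1}, σ does not map the set {1,...,k} to itself, then d_k - d_{k+1} ≥ -2mn. -/
/-- If `(d_1 ≤ ... ≤ d_n)` and `(d'_1 ≤ ... ≤ d'_n)` are joined by an edge of `G` given
by a permutation `σ` and coefficients `c_{a,b} ≥ -m`, and `σ` does not map the set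
`{1,...,k}` to itself (here `0`-indexed as `{0,...,k-1}`), then `d_k - d_{k+1} ≥ -2mn`. -/
theorem stmt3 (n m : ℕ) (d d' : Fin n → ℤ) (hd : Monotone d) (hd' : Monotone d')
    (σ : Equiv.Perm (Fin n)) (c : Fin n → Fin n → ℤ)
    (hc : ∀ a b : Fin n, -(m : ℤ) ≤ c a b)
    (hedge : ∀ a : Fin n, d' a = d (σ a)
      - ∑ s ∈ Finset.univ.filter (fun s : Fin n => s < a ∧ σ a < σ s), c s a
      + ∑ t ∈ Finset.univ.filter (fun t : Fin n => a < t ∧ σ t < σ a), c a t)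
    (k : ℕ) (hk1 : 1 ≤ k) (hk2 : k < n)
    (hσ : ¬ (∀ a : Fin n, a.val < k → (σ a).val < k)) :
    d ⟨k - 1, by omega⟩ - d ⟨k, hk2⟩ ≥ -(2 * (m : ℤ) * (n : ℤ)) := by
  push_neg at hσ
  obtain ⟨a0, ha0k, ha0σ⟩ := hσ
  -- general sum lower bound
  have key : ∀ (F : Finset (Fin n)) (f : Fin n → ℤ),
      (∀ x, -(m : ℤ) ≤ f x) → -((m : ℤ) * n) ≤ ∑ x ∈ F, f x := by
    intro F f hf
    have h1 : F.card • (-(m : ℤ)) ≤ ∑ x ∈ F, f x :=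
      Finset.card_nsmul_le_sum F f _ (fun x _ => hf x)
    have h2 : (F.card : ℤ) ≤ n := by
      have := Finset.card_le_univ F
      simp only [Finset.card_univ, Fintype.card_fin] at this
      exact_mod_cast this
    have hm : (0 : ℤ) ≤ m := Int.ofNat_nonneg m
    rw [nsmul_eq_mul] at h1
    nlinarith
  -- choose a maximizing σ on {x | x.val < k}
  set S : Finset (Fin n) := Finset.univ.filter (fun x => x.val < k) with hS
  have hSne : S.Nonempty := ⟨a0, by simp [hS, ha0k]⟩
  obtain ⟨a, haS, ha⟩ := S.exists_max_image σ hSne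
  have hak : a.val < k := by simpa [hS] using haS
  have haσ : k ≤ (σ a).val := le_trans ha0σ (ha a0 (by simp [hS, ha0k]))
  -- choose b minimizing σ on {x | k ≤ x.val}
  set T : Finset (Fin n) := Finset.univ.filter (fun x => k ≤ x.val) with hT
  have hTne : T.Nonempty := ⟨⟨k, hk2⟩, by simp [hT]⟩
  obtain ⟨b, hbT, hb⟩ := T.exists_min_image σ hTne
  have hbk : k ≤ b.val := by simpa [hT] using hbT
  have hbσ : (σ b).val < k := by
    by_contra hcon
    push_neg at hcon
    -- then σ maps T into T, hence onto T, but σ a ∈ T with a ∉ T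
    have himg : T.image σ ⊆ T := by
      intro y hy
      obtain ⟨t, htT, rfl⟩ := Finset.mem_image.mp hy
      have : σ b ≤ σ t := hb t htT
      simp only [hT, Finset.mem_filter, Finset.mem_univ, true_and]
      exact le_trans hcon this
    have hcard : (T.image σ).card = T.card := Finset.card_image_of_injective T σ.injective
    have heq : T.image σ = T := Finset.eq_of_subset_of_card_le himg (le_of_eq hcard.symm)
    have hσaT : σ a ∈ T := by
      simp only [hT, Finset.mem_filter, Finset.mem_univ, true_and]; exact haσ
    rw [← heq] at hσaT
    obtain ⟨t, htT, hteq⟩ := Finset.mem_image.mp hσaT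
    have : t = a := σ.injective hteq
    subst this
    have : k ≤ t.val := by simpa [hT] using htT
    omega
  have hab : a ≤ b := by
    have : a.val ≤ b.val := by omega
    exact this
  -- the "bad" sums vanish
  have hA1 : Finset.univ.filter (fun s : Fin n => s < a ∧ σ a < σ s) = ∅ := by
    ext s
    simp only [Finset.mem_filter, Finset.mem_univ, true_and, Finset.notMem_empty, iff_false]
    rintro ⟨hsa, hσs⟩
    have hsS : s ∈ S := by
      simp only [hS, Finset.mem_filter, Finset.mem_univ, true_and]
      exact lt_trans hsa (by exact hak : a < (⟨k, hk2⟩ : Fin n))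
    exact absurd (ha s hsS) (not_le.mpr hσs)
  have hB2 : Finset.univ.filter (fun t : Fin n => b < t ∧ σ t < σ b) = ∅ := by
    ext t
    simp only [Finset.mem_filter, Finset.mem_univ, true_and, Finset.notMem_empty, iff_false]
    rintro ⟨hbt, hσt⟩
    have htT : t ∈ T := by
      simp only [hT, Finset.mem_filter, Finset.mem_univ, true_and]
      have : b.val < t.val := hbt
      omega
    exact absurd (hb t htT) (not_le.mpr hσt)
  have hda : d ⟨k, hk2⟩ ≤ d (σ a) := hd (by exact haσ)
  have hdb : d (σ b) ≤ d ⟨k - 1, by omega⟩ := hd (by show (σ b).val ≤ k - 1; omega)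
  have hea := hedge a
  have heb := hedge b
  rw [hA1] at hea
  rw [hB2] at heb
  simp only [Finset.sum_empty] at hea heb
  have hA2 : -((m : ℤ) * n) ≤ ∑ t ∈ Finset.univ.filter (fun t : Fin n => a < t ∧ σ t < σ a), c a t :=
    key _ _ (fun x => hc a x)
  have hB1 : -((m : ℤ) * n) ≤ ∑ s ∈ Finset.univ.filter (fun s : Fin n => s < b ∧ σ b < σ s), c s b :=
    key _ _ (fun x => hc x b)
  have hd'ab : d' a ≤ d' b := hd' hab
  rw [hea, heb] at hd'ab
  linarith
end

section
/- Fix a finite set I with a total order, a degree (n_i)_{i∈I} ∈ ℕ^I, an integer d, and a word v. Then there are only finitely many non-increasing words [i_1^{(d_1)}...i_n^{(d_n)}] of degree ((Σ ς_{i_a}), d_1+...+d_n) = ((n_i), d) that are lexicographically bounded above by v. -/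
/-- The order on letters `i^{(d)}`: `i^{(d)} < j^{(e)}` iff `d > e`, or `d = e` and
`i < j`. -/
def ltLetter {ι : Type*} [LT ι] (x y : ι × ℤ) : Prop :=
  y.2 < x.2 ∨ (x.2 = y.2 ∧ x.1 < y.1)

/-- `x ≥ y` for letters. -/
def geLetter {ι : Type*} [LT ι] (x y : ι × ℤ) : Prop :=
  ltLetter y x ∨ x = y

lemma finite_bounded_lists {α : Type*} {s : Set α} (hs : s.Finite) (n : ℕ) :
    {l : List α | l.length ≤ n ∧ ∀ x ∈ l, x ∈ s}.Finite := by
  haveI := hs.to_subtype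
  apply ((List.finite_length_le (↥s) n).image (List.map Subtype.val)).subset
  rintro l ⟨hlen, hmem⟩
  refine ⟨l.attach.map (fun x => ⟨x.1, hmem _ x.2⟩), by simpa using hlen, ?_⟩
  simp [List.map_map, Function.comp_def]

lemma geLetter_snd {ι : Type*} [LT ι] {x y : ι × ℤ} (h : geLetter x y) : x.2 ≤ y.2 := by
  rcases h with (h | h) | h
  · exact h.le
  · exact h.1.ge
  · exact h ▸ le_refl _

lemma int_list_mem_bound {l : List ℤ} {m z : ℤ} (hz : z ∈ l) (hm : ∀ y ∈ l, m ≤ y) :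
    z ≤ l.sum - ((l.length : ℤ) - 1) * m := by
  have h1 : z + (l.erase z).sum = l.sum := List.sum_erase hz
  have h2 : (l.erase z).length • m ≤ (l.erase z).sum :=
    List.card_nsmul_le_sum _ _ (fun x hx => hm x (List.mem_of_mem_erase hx))
  have h3 : (l.erase z).length + 1 = l.length := List.length_erase_add_one hz
  rw [nsmul_eq_mul] at h2
  have h4 : ((l.erase z).length : ℤ) = (l.length : ℤ) - 1 := by omega
  rw [h4] at h2
  linarith

/-- There are only finitely many non-increasing words of a given degree
`((n_i)_{i ∈ I}, d)` that are lexicographically bounded above by a given word `v`. -/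
theorem stmt7 {ι : Type*} [LinearOrder ι] [Fintype ι]
    (nn : ι → ℕ) (d : ℤ) (v : List (ι × ℤ)) :
    {w : List (ι × ℤ) |
      List.Chain' geLetter w ∧
      (∀ i : ι, (w.map Prod.fst).count i = nn i) ∧
      (w.map Prod.snd).sum = d ∧
      ¬ List.Lex ltLetter v w}.Finite := by
  rcases v with _ | ⟨u, v'⟩
  · apply (Set.finite_singleton ([] : List (ι × ℤ))).subset
    rintro (_ | ⟨y, t⟩) ⟨_, _, _, hlex⟩
    · rfl
    · exact absurd List.Lex.nil hlex
  · set n := ∑ i, nn i with hn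
    set m := u.2 with hm
    set M := d - ((n : ℤ) - 1) * m with hM
    apply (finite_bounded_lists
      ((Set.finite_univ (α := ι)).prod (Set.finite_Icc m M)) n).subset
    rintro w ⟨hchain, hcount, hsum, hlex⟩
    have hlen : w.length = n := by
      have : (↑(w.map Prod.fst) : Multiset ι).card = ∑ i, nn i := by
        rw [← Multiset.sum_count_eq_card (s := Finset.univ) (fun a _ => Finset.mem_univ a)]
        simp only [Multiset.coe_count]
        exact Finset.sum_congr rfl fun i _ => hcount i
      simpa using this
    refine ⟨hlen.le, ?_⟩
    rcases w with _ | ⟨y, t⟩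
    · intro x hx; simp at hx
    have hy2 : m ≤ y.2 := by
      by_contra h
      push_neg at h
      exact hlex (List.Lex.rel (Or.inl h))
    have hall : ∀ x ∈ y :: t, m ≤ x.2 := by
      haveI : IsTrans (ι × ℤ) (fun a b : ι × ℤ => a.2 ≤ b.2) := ⟨fun _ _ _ => le_trans⟩
      have hpw : List.Pairwise (fun a b : ι × ℤ => a.2 ≤ b.2) (y :: t) :=
        List.isChain_iff_pairwise.mp (List.IsChain.imp (fun a b h => geLetter_snd h) hchain)
      intro x hx
      rcases List.mem_cons.mp hx with rfl | hx
      · exact hy2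
      · exact hy2.trans ((List.pairwise_cons.mp hpw).1 x hx)
    intro x hx
    refine ⟨Set.mem_univ _, hall x hx, ?_⟩
    have hb := int_list_mem_bound (l := (y :: t).map Prod.snd) (m := m) (z := x.2)
      (List.mem_map_of_mem (f := Prod.snd) hx)
      (by rintro z hz
          obtain ⟨a, ha, rfl⟩ := List.mem_map.mp hz
          exact hall a ha)
    rw [hsum] at hb
    have hlen' : ((y :: t).map Prod.snd).length = n := by
      rw [List.length_map]; exact hlen
    rw [hlen'] at hb
    exact hb
end

section
/- In a quotient of a free associative algebra with relations of the form e_{i,a} e_{j,b} + Σ_{x=1}^{m} c_x · e_{i,a-x} e_{j,b+x} = e_{j,b} e_{i,a} + Σ_{y=1}^{m} c'_y · e_{j,b-y} e_{i,a+y} (for generators e_{i,d}, i in a finite totally ordered set I, d ∈ ℤ, and fixed m), every product e_{i_1,d_1}···e_{i_n,d_n} can be written as a linear combination of products e_{j_1,r_1}···e_{j_n,r_n} such that the words [j_1^{(r_1)}...j_n^{(r_n)}] are lexicographically ≥ [i_1^{(d_1)}...i_n^{(d_n)}], each word [j_1^{(r_1)}...j_n^{(r_n)}] is non-increasing, and all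 exponents r_k satisfy min(d_k) - β(n) ≤ r_k ≤ max(d_k) + β(n) for a constant β(n) depending only on n and m. -/
open scoped BigOperators

section Letter
variable {ι : Type*} [LinearOrder ι]

theorem ltLetter_trans {x y z : ι × ℤ} (h1 : ltLetter x y) (h2 : ltLetter y z) :
    ltLetter x z := by
  rcases h1 with h1 | ⟨h1, h1'⟩ <;> rcases h2 with h2 | ⟨h2, h2'⟩
  · exact Or.inl (h2.trans h1)
  · exact Or.inl (h2 ▸ h1)
  · exact Or.inl (h1 ▸ h2)
  · exact Or.inr ⟨h1.trans h2, h1'.trans h2'⟩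

theorem ltLetter_irrefl (x : ι × ℤ) : ¬ ltLetter x x := by
  rintro (h | ⟨h, h'⟩)
  · exact lt_irrefl _ h
  · exact lt_irrefl _ h'

theorem ltLetter_of_not_ge {x y : ι × ℤ} (h : ¬ geLetter x y) : ltLetter x y := by
  rw [geLetter, ltLetter] at h
  push_neg at h
  obtain ⟨⟨h1, h2⟩, h3⟩ := h
  rcases eq_or_lt_of_le h1 with he | hl
  · right
    refine ⟨he.symm, ?_⟩
    rcases lt_trichotomy x.1 y.1 with hh | hh | hh
    · exact hh
    · exact absurd (Prod.ext hh he.symm) h3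
    · exact absurd (h2 he) (not_le.2 hh)
  · exact Or.inl hl

end Letter

section ListLemmas
variable {α : Type*} {r : α → α → Prop}

theorem myLex_trans {l1 l2 l3 : List α} (h1 : List.Lex r l1 l2) (h2 : List.Lex r l2 l3)
    (hr : ∀ {a b c : α}, r a b → r b c → r a c) : List.Lex r l1 l3 := by
  induction h1 generalizing l3 with
  | nil =>
    cases h2 with
    | rel h => exact List.Lex.nil
    | cons h => exact List.Lex.nil
  | @rel a l b l' h =>
    cases h2 with
    | rel h' => exact List.Lex.rel (hr h h')
    | cons h' => exact List.Lex.rel h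
  | @cons a l l' h ih =>
    cases h2 with
    | rel h' => exact List.Lex.rel h'
    | cons h' => exact List.Lex.cons (ih h')

theorem myLex_irrefl (hr : ∀ a : α, ¬ r a a) : ∀ l : List α, ¬ List.Lex r l l := by
  intro l h
  induction l with
  | nil => cases h
  | cons a t ih =>
    cases h with
    | cons h => exact ih h
    | rel h => exact hr a h

theorem myLex_append_cons {x x' : α} (h : r x x') (l1 t t' : List α) :
    List.Lex r (l1 ++ x :: t) (l1 ++ x' :: t') := by
  induction l1 with
  | nil => exact List.Lex.rel h
  | cons a s ih => exact List.Lex.cons ih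

theorem exists_descent :
    ∀ L : List α, ¬ L.Chain' r → ∃ l1 x y l2, L = l1 ++ x :: y :: l2 ∧ ¬ r x y := by
  intro L
  induction L with
  | nil => intro h; exact absurd List.isChain_nil h
  | cons a t ih =>
    intro h
    cases t with
    | nil => exact absurd (List.isChain_singleton a) h
    | cons b s =>
      by_cases hab : r a b
      · have : ¬ (b :: s).Chain' r := by
          intro hc
          exact h (List.isChain_cons_cons.2 ⟨hab, hc⟩)
        obtain ⟨l1, x, y, l2, hL, hxy⟩ := ih this
        exact ⟨a :: l1, x, y, l2, by rw [List.cons_append, ← hL], hxy⟩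
      · exact ⟨[], a, b, s, rfl, hab⟩

end ListLemmas

section Box
variable {ι : Type*}

def BoxAux (s : ℤ) : ℤ → ℤ → List (ι × ℤ) → Prop
  | _, _, [] => True
  | l, h, x :: t => (l ≤ x.2 ∧ x.2 ≤ h) ∧ BoxAux s (l + s) (h + s) t

theorem boxAux_append (s : ℤ) (L1 L2 : List (ι × ℤ)) : ∀ l h : ℤ,
    BoxAux s l h (L1 ++ L2) ↔
      BoxAux s l h L1 ∧ BoxAux s (l + s * L1.length) (h + s * L1.length) L2 := by
  induction L1 with
  | nil => intro l h; simp [BoxAux]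
  | cons a t ih =>
    intro l h
    have e1 : l + s * ((a :: t).length : ℤ) = (l + s) + s * (t.length : ℤ) := by
      push_cast [List.length_cons]; ring
    have e2 : h + s * ((a :: t).length : ℤ) = (h + s) + s * (t.length : ℤ) := by
      push_cast [List.length_cons]; ring
    rw [List.cons_append]
    show ((l ≤ a.2 ∧ a.2 ≤ h) ∧ BoxAux s (l + s) (h + s) (t ++ L2)) ↔ _
    rw [ih, e1, e2]
    show _ ↔ ((l ≤ a.2 ∧ a.2 ≤ h) ∧ BoxAux s (l + s) (h + s) t) ∧ _
    tauto

theorem boxAux_of_const (s : ℤ) (hs : 0 ≤ s) :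
    ∀ (L : List (ι × ℤ)) (l h : ℤ),
      (∀ x ∈ L, l + s * L.length ≤ x.2 + s ∧ x.2 ≤ h) → BoxAux s l h L := by
  intro L
  induction L with
  | nil => intro l h _; trivial
  | cons a t ih =>
    intro l h hx
    obtain ⟨h1, h2⟩ := hx a List.mem_cons_self
    have hlen : (((a :: t).length : ℕ) : ℤ) = (t.length : ℤ) + 1 := by
      push_cast [List.length_cons]; ring
    refine ⟨⟨?_, h2⟩, ih (l + s) (h + s) ?_⟩
    · have hnn : (0:ℤ) ≤ s * t.length := mul_nonneg hs (by positivity)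
      rw [hlen] at h1
      linarith
    · intro x hxm
      obtain ⟨g1, g2⟩ := hx x (List.mem_cons_of_mem a hxm)
      rw [hlen] at g1
      constructor
      · linarith
      · linarith

theorem boxAux_bound (s : ℤ) (hs : 0 ≤ s) :
    ∀ (L : List (ι × ℤ)) (l h : ℤ), BoxAux s l h L →
      ∀ x ∈ L, l ≤ x.2 ∧ x.2 ≤ h + s * L.length := by
  intro L
  induction L with
  | nil => intro l h _ x hx; cases hx
  | cons a t ih =>
    intro l h hb x hx
    obtain ⟨⟨h1, h2⟩, hbt⟩ := hb
    have hlen : (((a :: t).length : ℕ) : ℤ) = (t.length : ℤ) + 1 := by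
      push_cast [List.length_cons]; ring
    have hnn : (0:ℤ) ≤ s * t.length := mul_nonneg hs (by positivity)
    rcases List.mem_cons.1 hx with rfl | hx'
    · rw [hlen]; constructor
      · exact h1
      · linarith
    · obtain ⟨g1, g2⟩ := ih (l + s) (h + s) hbt x hx'
      rw [hlen]
      constructor
      · linarith
      · linarith

end Box
/-- In any algebra with generators `e_{i,d}` satisfying quadratic relations of the form
`e_{i,a} e_{j,b} + Σ_{x=1}^m c_x e_{i,a-x} e_{j,b+x} = e_{j,b} e_{i,a} + Σ_{y=1}^m c'_y e_{j,b-y} e_{i,a+y}`,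
every product `e_{i_1,d_1} ⋯ e_{i_n,d_n}` is a linear combination of products indexed by
non-increasing words that are lexicographically `≥ [i_1^{(d_1)} … i_n^{(d_n)}]` and whose
exponents lie within `β(n)` of the interval `[min d_k, max d_k]`, for a constant `β(n)`
depending only on `n` and `m`. -/
theorem stmt13 {ι : Type*} [Fintype ι] [LinearOrder ι] (F : Type*) [Field F]
    (m n : ℕ) :
    ∃ β : ℕ,
      ∀ (A : Type*) [Ring A] [Algebra F A] (e : ι → ℤ → A)
        (c c' : ι → ι → Fin m → F),
        (∀ (i j : ι) (a b : ℤ),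
          e i a * e j b
              + ∑ x : Fin m, c i j x • (e i (a - ((x : ℕ) + 1)) * e j (b + ((x : ℕ) + 1)))
            = e j b * e i a
              + ∑ y : Fin m, c' i j y • (e j (b - ((y : ℕ) + 1)) * e i (a + ((y : ℕ) + 1)))) →
        ∀ w : Fin n → ι × ℤ,
          ∃ (S : Finset (Fin n → ι × ℤ)) (coeff : (Fin n → ι × ℤ) → F),
            (List.ofFn (fun k => e (w k).1 (w k).2)).prod
                = ∑ u ∈ S, coeff u • (List.ofFn (fun k => e (u k).1 (u k).2)).prod ∧
            ∀ u ∈ S,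
              (¬ List.Lex ltLetter (List.ofFn u) (List.ofFn w)) ∧
              List.Chain' geLetter (List.ofFn u) ∧
              ∀ k : Fin n,
                (∃ l : Fin n, (w l).2 - (β : ℤ) ≤ (u k).2) ∧
                (∃ l : Fin n, (u k).2 ≤ (w l).2 + (β : ℤ)) := by
  classical
  refine ⟨m * n, ?_⟩
  intro A _ _ e c c' hrel w
  rcases Nat.eq_zero_or_pos n with hn | hn
  · subst hn
    refine ⟨{w}, fun _ => 1, ?_, ?_⟩
    · simp
    · intro u hu
      rw [Finset.mem_singleton] at hu
      subst hu
      refine ⟨?_, ?_, fun k => k.elim0⟩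
      · intro h
        rw [List.ofFn_zero] at h
        cases h
      · rw [List.ofFn_zero]
        exact List.isChain_nil
  -- main case : n ≥ 1
  have hs : (0:ℤ) ≤ (m:ℤ) := by positivity
  have hne : (Finset.univ : Finset (Fin n)).Nonempty := ⟨⟨0, hn⟩, Finset.mem_univ _⟩
  obtain ⟨kp, -, hp⟩ := Finset.exists_mem_eq_inf' hne (fun k => (w k).2)
  obtain ⟨kq, -, hq⟩ := Finset.exists_mem_eq_sup' hne (fun k => (w k).2)
  set p : ℤ := (w kp).2 with hpdef
  set q : ℤ := (w kq).2 with hqdef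
  have hpmin : ∀ k, p ≤ (w k).2 := fun k => hp ▸ Finset.inf'_le _ (Finset.mem_univ k)
  have hqmax : ∀ k, (w k).2 ≤ q := fun k => hq ▸ Finset.le_sup' (fun k => (w k).2) (Finset.mem_univ k)
  set l₀ : ℤ := p + (m:ℤ) - (m:ℤ) * n with hl₀
  set PrF : (Fin n → ι × ℤ) → A := fun u => (List.ofFn fun k => e (u k).1 (u k).2).prod
    with hPrF
  set Pr : List (ι × ℤ) → A := fun L => (L.map fun x => e x.1 x.2).prod with hPr
  set Good : Set (Fin n → ι × ℤ) :=
    {u | (¬ List.Lex ltLetter (List.ofFn u) (List.ofFn w)) ∧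
      List.Chain' geLetter (List.ofFn u) ∧
      ∀ k, p - (m:ℤ) * n ≤ (u k).2 ∧ (u k).2 ≤ q + (m:ℤ) * n} with hGood
  set M : Submodule F A := Submodule.span F (PrF '' Good) with hM
  set BF : Finset (Fin n → ι × ℤ) :=
    Fintype.piFinset fun _ : Fin n =>
      (Finset.univ : Finset ι) ×ˢ Finset.Icc (p - (m:ℤ) * n) (q + (m:ℤ) * n) with hBF
  set μ : List (ι × ℤ) → ℕ :=
    fun L => (BF.filter fun v : Fin n → ι × ℤ => List.Lex ltLetter L (List.ofFn v)).card
    with hμ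
  have toFun : ∀ L : List (ι × ℤ), L.length = n → ∃ u : Fin n → ι × ℤ, List.ofFn u = L := by
    intro L hL
    refine ⟨fun k => L.get ⟨k.1, by rw [hL]; exact k.2⟩, ?_⟩
    apply List.ext_getElem
    · simp [hL]
    · intro i h1 h2
      simp
  have boxmem : ∀ L : List (ι × ℤ), L.length = n → BoxAux (m:ℤ) l₀ q L →
      ∀ x ∈ L, p - (m:ℤ) * n ≤ x.2 ∧ x.2 ≤ q + (m:ℤ) * n := by
    intro L hL hbox x hx
    obtain ⟨g1, g2⟩ := boxAux_bound (m:ℤ) hs L _ _ hbox x hx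
    rw [hL] at g2
    constructor
    · rw [hl₀] at g1; linarith
    · linarith
  have hsplitPr : ∀ (l1 l2 : List (ι × ℤ)) (x' y' : ι × ℤ),
      Pr (l1 ++ x' :: y' :: l2) = Pr l1 * (e x'.1 x'.2 * (e y'.1 y'.2 * Pr l2)) := by
    intro l1 l2 x' y'
    simp [hPr, mul_assoc]
  -- the main rewriting step
  have step : ∀ L : List (ι × ℤ), L.length = n → BoxAux (m:ℤ) l₀ q L →
      ¬ List.Lex ltLetter L (List.ofFn w) →
      (∀ L' : List (ι × ℤ), L'.length = n → BoxAux (m:ℤ) l₀ q L' →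
        ¬ List.Lex ltLetter L' (List.ofFn w) → μ L' < μ L → Pr L' ∈ M) →
      Pr L ∈ M := by
    intro L hlen hbox hlex IH
    by_cases hch : L.Chain' geLetter
    · obtain ⟨u, hu⟩ := toFun L hlen
      have hGoodu : u ∈ Good := by
        refine ⟨by rw [hu]; exact hlex, by rw [hu]; exact hch, ?_⟩
        intro k
        have hmem : u k ∈ L := by
          rw [← hu]; exact List.mem_ofFn.2 ⟨k, rfl⟩
        exact boxmem L hlen hbox _ hmem
      refine Submodule.subset_span ⟨u, hGoodu, ?_⟩
      show PrF u = Pr L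
      simp only [hPrF, hPr, ← hu, List.map_ofFn]
      rfl
    · obtain ⟨l1, x, y, l2, hdec, hnge⟩ := exists_descent L hch
      obtain ⟨i, a⟩ := x
      obtain ⟨j, b⟩ := y
      have hxy : ltLetter (i,a) (j,b) := ltLetter_of_not_ge hnge
      have hxy' : b < a ∨ (a = b ∧ i < j) := hxy
      have hba : b ≤ a := by
        rcases hxy' with h | ⟨h, -⟩
        · exact le_of_lt h
        · exact le_of_eq h.symm
      have hlen' : l1.length + (l2.length + 2) = n := by
        rw [hdec] at hlen
        simpa [List.length_append] using hlen
      obtain ⟨hb1, hb2⟩ := (boxAux_append (m:ℤ) l1 ((i,a) :: (j,b) :: l2) l₀ q).1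
        (hdec ▸ hbox)
      obtain ⟨⟨ha1, ha2⟩, ⟨hc1, hc2⟩, hbl2⟩ := hb2
      -- child membership machinery
      have child : ∀ x' y' : ι × ℤ, ltLetter (i,a) x' →
          l₀ + (m:ℤ) * l1.length ≤ x'.2 → x'.2 ≤ q + (m:ℤ) * l1.length →
          l₀ + (m:ℤ) * l1.length + (m:ℤ) ≤ y'.2 → y'.2 ≤ q + (m:ℤ) * l1.length + (m:ℤ) →
          Pr (l1 ++ x' :: y' :: l2) ∈ M := by
        intro x' y' hlt c1 c2 c3 c4
        have hlenc : (l1 ++ x' :: y' :: l2).length = n := by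
          simp [List.length_append]
          omega
        have hboxc : BoxAux (m:ℤ) l₀ q (l1 ++ x' :: y' :: l2) := by
          rw [boxAux_append]
          exact ⟨hb1, ⟨c1, c2⟩, ⟨c3, c4⟩, hbl2⟩
        have hlexLC : List.Lex ltLetter L (l1 ++ x' :: y' :: l2) := by
          rw [hdec]
          exact myLex_append_cons hlt l1 _ _
        have hlexc : ¬ List.Lex ltLetter (l1 ++ x' :: y' :: l2) (List.ofFn w) :=
          fun hcon => hlex (myLex_trans hlexLC hcon ltLetter_trans)
        refine IH _ hlenc hboxc hlexc ?_
        obtain ⟨v0, hv0⟩ := toFun _ hlenc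
        have hv0BF : v0 ∈ BF := by
          rw [hBF, Fintype.mem_piFinset]
          intro k'
          rw [Finset.mem_product]
          refine ⟨Finset.mem_univ _, Finset.mem_Icc.2 ?_⟩
          have hmem : v0 k' ∈ l1 ++ x' :: y' :: l2 := by
            rw [← hv0]; exact List.mem_ofFn.2 ⟨k', rfl⟩
          exact boxmem _ hlenc hboxc _ hmem
        apply Finset.card_lt_card
        rw [Finset.ssubset_iff_of_subset]
        · refine ⟨v0, Finset.mem_filter.2 ⟨hv0BF, by rw [hv0]; exact hlexLC⟩, fun hv => ?_⟩
          have := (Finset.mem_filter.1 hv).2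
          rw [hv0] at this
          exact myLex_irrefl ltLetter_irrefl _ this
        · intro v hv
          rw [Finset.mem_filter] at hv ⊢
          exact ⟨hv.1, myLex_trans hlexLC hv.2 ltLetter_trans⟩
      -- the algebraic identity
      have h0 : e i a * e j b
          = e j b * e i a
            + (∑ t : Fin m, c' i j t • (e j (b - ((t : ℕ) + 1)) * e i (a + ((t : ℕ) + 1))))
            - (∑ t : Fin m, c i j t • (e i (a - ((t : ℕ) + 1)) * e j (b + ((t : ℕ) + 1)))) := by
        rw [eq_sub_iff_add_eq]
        exact hrel i j a b
      have hC2 : ∀ (f : Fin m → F) (X Y : Fin m → A),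
          Pr l1 * ((∑ t : Fin m, f t • (X t * Y t)) * Pr l2)
            = ∑ t : Fin m, f t • (Pr l1 * (X t * (Y t * Pr l2))) := by
        intro f X Y
        rw [Finset.sum_mul, Finset.mul_sum]
        refine Finset.sum_congr rfl fun t _ => ?_
        rw [smul_mul_assoc, mul_smul_comm, mul_assoc]
      have hEq : Pr L
          = Pr (l1 ++ (j,b) :: (i,a) :: l2)
            + ∑ t : Fin m, c' i j t •
                Pr (l1 ++ (j, b - ((t : ℕ) + 1)) :: (i, a + ((t : ℕ) + 1)) :: l2)
            - ∑ t : Fin m, c i j t •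
                Pr (l1 ++ (i, a - ((t : ℕ) + 1)) :: (j, b + ((t : ℕ) + 1)) :: l2) := by
        have e1 : Pr L = Pr l1 * ((e i a * e j b) * Pr l2) := by
          rw [hdec, hsplitPr]
          simp [mul_assoc]
        have e2 : Pr l1 * (((e j b * e i a)
              + (∑ t : Fin m, c' i j t • (e j (b - ((t : ℕ) + 1)) * e i (a + ((t : ℕ) + 1))))
              - (∑ t : Fin m, c i j t • (e i (a - ((t : ℕ) + 1)) * e j (b + ((t : ℕ) + 1)))))
              * Pr l2)
            = Pr l1 * ((e j b * e i a) * Pr l2)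
              + Pr l1 * ((∑ t : Fin m, c' i j t •
                  (e j (b - ((t : ℕ) + 1)) * e i (a + ((t : ℕ) + 1)))) * Pr l2)
              - Pr l1 * ((∑ t : Fin m, c i j t •
                  (e i (a - ((t : ℕ) + 1)) * e j (b + ((t : ℕ) + 1)))) * Pr l2) := by
          noncomm_ring
        rw [e1, h0, e2, hC2, hC2]
        congr 1
        · congr 1
          · rw [hsplitPr]
            simp [mul_assoc]
          · refine Finset.sum_congr rfl fun t _ => ?_
            rw [hsplitPr]
        · refine Finset.sum_congr rfl fun t _ => ?_
          rw [hsplitPr]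
      rw [hEq]
      have htm : ∀ t : Fin m, ((t : ℕ) : ℤ) + 1 ≤ (m : ℤ) := by
        intro t
        exact_mod_cast t.isLt
      refine sub_mem (add_mem ?_ (Submodule.sum_mem _ fun t _ => Submodule.smul_mem _ _ ?_))
        (Submodule.sum_mem _ fun t _ => Submodule.smul_mem _ _ ?_)
      · refine child (j,b) (i,a) hxy ?_ ?_ ?_ ?_
        · show l₀ + (m:ℤ) * l1.length ≤ b; linarith
        · show b ≤ q + (m:ℤ) * l1.length; linarith
        · show l₀ + (m:ℤ) * l1.length + (m:ℤ) ≤ a; linarith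
        · show a ≤ q + (m:ℤ) * l1.length + (m:ℤ); linarith
      · have ht := htm t
        refine child (j, b - ((t : ℕ) + 1)) (i, a + ((t : ℕ) + 1)) (Or.inl ?_) ?_ ?_ ?_ ?_
        · show b - ((t : ℕ) + 1) < a
          have : (0:ℤ) ≤ ((t : ℕ) : ℤ) := by positivity
          linarith
        · show l₀ + (m:ℤ) * l1.length ≤ b - ((t : ℕ) + 1); linarith
        · show b - ((t : ℕ) + 1) ≤ q + (m:ℤ) * l1.length
          have : (0:ℤ) ≤ ((t : ℕ) : ℤ) := by positivity
          linarith
        · show l₀ + (m:ℤ) * l1.length + (m:ℤ) ≤ a + ((t : ℕ) + 1)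
          have : (0:ℤ) ≤ ((t : ℕ) : ℤ) := by positivity
          linarith
        · show a + ((t : ℕ) + 1) ≤ q + (m:ℤ) * l1.length + (m:ℤ); linarith
      · have ht := htm t
        refine child (i, a - ((t : ℕ) + 1)) (j, b + ((t : ℕ) + 1)) (Or.inl ?_) ?_ ?_ ?_ ?_
        · show a - ((t : ℕ) + 1) < a
          have : (0:ℤ) ≤ ((t : ℕ) : ℤ) := by positivity
          linarith
        · show l₀ + (m:ℤ) * l1.length ≤ a - ((t : ℕ) + 1); linarith
        · show a - ((t : ℕ) + 1) ≤ q + (m:ℤ) * l1.length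
          have : (0:ℤ) ≤ ((t : ℕ) : ℤ) := by positivity
          linarith
        · show l₀ + (m:ℤ) * l1.length + (m:ℤ) ≤ b + ((t : ℕ) + 1)
          have : (0:ℤ) ≤ ((t : ℕ) : ℤ) := by positivity
          linarith
        · show b + ((t : ℕ) + 1) ≤ q + (m:ℤ) * l1.length + (m:ℤ); linarith
  -- well-founded iteration of step
  have key : ∀ (N : ℕ) (L : List (ι × ℤ)), μ L ≤ N → L.length = n →
      BoxAux (m:ℤ) l₀ q L → ¬ List.Lex ltLetter L (List.ofFn w) → Pr L ∈ M := by
    intro N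
    induction N with
    | zero =>
      intro L hμL h1 h2 h3
      exact step L h1 h2 h3 fun L' _ _ _ hlt =>
        absurd (lt_of_lt_of_le hlt hμL) (Nat.not_lt_zero _)
    | succ N ih =>
      intro L hμL h1 h2 h3
      exact step L h1 h2 h3 fun L' a b cc hlt => ih L' (by omega) a b cc
  -- apply to the initial word
  have boxW : BoxAux (m:ℤ) l₀ q (List.ofFn w) := by
    apply boxAux_of_const (m:ℤ) hs
    intro x hx
    obtain ⟨k, hk⟩ := List.mem_ofFn.1 hx
    rw [List.length_ofFn]
    constructor
    · rw [hl₀]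
      have := hpmin k
      rw [← hk]
      linarith
    · rw [← hk]
      exact hqmax k
  have hW : Pr (List.ofFn w) ∈ M :=
    key (μ (List.ofFn w)) (List.ofFn w) le_rfl (List.length_ofFn (f := w)) boxW
      (myLex_irrefl ltLetter_irrefl _)
  have hW' : PrF w ∈ M := by
    rw [hPrF, hPr] at *
    simpa [List.map_ofFn, Function.comp_def] using hW
  rw [hM, Finsupp.mem_span_image_iff_linearCombination] at hW'
  obtain ⟨lc, hsupp, hlc⟩ := hW'
  rw [Finsupp.mem_supported] at hsupp
  refine ⟨lc.support, fun u => lc u, ?_, ?_⟩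
  · show PrF w = ∑ u ∈ lc.support, lc u • PrF u
    rw [← hlc, Finsupp.linearCombination_apply]
    rfl
  · intro u hu
    have hG : u ∈ Good := hsupp hu
    obtain ⟨g1, g2, g3⟩ := hG
    refine ⟨g1, g2, fun k => ⟨⟨kp, ?_⟩, ⟨kq, ?_⟩⟩⟩
    · have := (g3 k).1
      push_cast
      rw [← hpdef]
      linarith
    · have := (g3 k).2
      push_cast
      rw [← hqdef]
      linarith
end

section
/- The graph G (vertices: non-decreasing integer n-tuples; edges: d'_a = d_{σ(a)} - Σ_{s<a,σ(s)>σ(a)} c_{s,a} + Σ_{a<t,σ(a)>σ(t)} c_{a,t} with c_{a,b} ≥ -m) is isomorphic to the graph G' (vertices: integer n-tuples with d_a ≤ d_{a+1} + m for all a; edges: same formula but requiring c_{a,b} ≥ 0), via the map (d_1,...,d_n) ↦ (d_1 + m(n-1)/2, d_2 + m(n-3)/2, ..., d_n - m(n-1)/2) (assuming m(n-1) even, or working over half-integers). -/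
open scoped BigOperators
open Finset

/-- The edge relation of the graph `G'` (coefficients `c_{a,b} ≥ 0`). -/
def G'Edge (n m : ℕ) (d d' : Fin n → ℤ) : Prop :=
  ∃ σ : Equiv.Perm (Fin n), σ ≠ 1 ∧ ∃ c : Fin n → Fin n → ℤ,
    (∀ a b : Fin n, 0 ≤ c a b) ∧
    ∀ a : Fin n, d' a = d (σ a)
      - ∑ s ∈ Finset.univ.filter (fun s : Fin n => s < a ∧ σ a < σ s), c s a
      + ∑ t ∈ Finset.univ.filter (fun t : Fin n => a < t ∧ σ t < σ a), c a t

/-- The vertex condition of `G'`: `d_a ≤ d_{a+1} + m` for all `a`. -/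
def G'Vertex (n m : ℕ) (d : Fin n → ℤ) : Prop :=
  ∀ (a : ℕ) (h : a + 1 < n), d ⟨a, by omega⟩ ≤ d ⟨a + 1, h⟩ + (m : ℤ)

/-- The shift map `(d_1,…,d_n) ↦ (d_1 + m(n-1)/2, d_2 + m(n-3)/2, …, d_n - m(n-1)/2)`. -/
def shiftMap (n m : ℕ) (d : Fin n → ℤ) : Fin n → ℤ :=
  fun a => d a + ((m : ℤ) * ((n : ℤ) - 1 - 2 * (a.val : ℤ))) / 2

lemma countKey (n:ℕ)(σ : Equiv.Perm (Fin n))(a : Fin n) :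
    (univ.filter (fun s : Fin n => s < a ∧ σ a < σ s)).card + (σ a).val
    = (univ.filter (fun t : Fin n => a < t ∧ σ t < σ a)).card + a.val := by
  have h1 : (univ.filter (fun s : Fin n => s < a)).card = a.val := by
    rw [show (univ.filter (fun s : Fin n => s < a)) = Finset.Iio a by ext s; simp, Fin.card_Iio]
  have h2 : (univ.filter (fun s : Fin n => σ s < σ a)).card = (σ a).val := by
    rw [show (univ.filter (fun s : Fin n => σ s < σ a)) = (Finset.Iio (σ a)).map σ.symm.toEmbedding by
      ext s; simp [eq_comm, Equiv.symm_apply_eq], Finset.card_map, Fin.card_Iio]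
  have s1 : (univ.filter (fun s : Fin n => s < a)).card
      = (univ.filter (fun s : Fin n => s < a ∧ σ a < σ s)).card
      + (univ.filter (fun s : Fin n => s < a ∧ σ s < σ a)).card := by
    rw [← Finset.card_union_of_disjoint ?_]
    · congr 1; ext s
      simp only [mem_filter, mem_union, mem_univ, true_and]
      constructor
      · intro h
        rcases lt_trichotomy (σ a) (σ s) with h2 | h2 | h2
        · exact Or.inl ⟨h, h2⟩
        · exact absurd (σ.injective h2.symm) (ne_of_lt h)
        · exact Or.inr ⟨h, h2⟩
      · rintro (⟨h,_⟩|⟨h,_⟩) <;> exact h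
    · rw [Finset.disjoint_filter]
      rintro s _ ⟨_, hx⟩ ⟨_, hy⟩
      exact absurd hy (not_lt_of_gt hx)
  have s2 : (univ.filter (fun s : Fin n => σ s < σ a)).card
      = (univ.filter (fun s : Fin n => s < a ∧ σ s < σ a)).card
      + (univ.filter (fun t : Fin n => a < t ∧ σ t < σ a)).card := by
    rw [← Finset.card_union_of_disjoint ?_]
    · congr 1; ext s
      simp only [mem_filter, mem_union, mem_univ, true_and]
      constructor
      · intro h
        have hs : s ≠ a := fun he => absurd (he ▸ h) (lt_irrefl _)
        rcases lt_or_gt_of_ne hs with h2 | h2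
        · exact Or.inl ⟨h2, h⟩
        · exact Or.inr ⟨h2, h⟩
      · rintro (⟨_,h⟩|⟨_,h⟩) <;> exact h
    · rw [Finset.disjoint_filter]
      rintro s _ ⟨hx, _⟩ ⟨hy, _⟩
      exact absurd hy (not_lt_of_gt hx)
  omega

lemma mono_of_adj (n : ℕ) (f : Fin n → ℤ)
    (h : ∀ (a : ℕ) (ha : a + 1 < n), f ⟨a, by omega⟩ ≤ f ⟨a+1, ha⟩) : Monotone f := by
  have key : ∀ (k : ℕ) (i : Fin n) (hk : i.val + k < n), f i ≤ f ⟨i.val + k, hk⟩ := by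
    intro k
    induction k with
    | zero => intro i hk; exact le_of_eq (congrArg f (Fin.ext (by simp)))
    | succ k ih =>
      intro i hk
      exact le_trans (ih i (by omega)) (h (i.val + k) (by omega))
  intro i j hij
  have hij' : i.val ≤ j.val := hij
  have := key (j.val - i.val) i (by omega)
  have hj : (⟨i.val + (j.val - i.val), by omega⟩ : Fin n) = j :=
    Fin.ext (show i.val + (j.val - i.val) = j.val by omega)
  rwa [hj] at this

/-- Assuming `m(n-1)` is even, the shift map is an isomorphism from the graph `G`
(vertices: non-decreasing tuples, coefficients `≥ -m`) onto the graph `G'`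
(vertices: tuples with `d_a ≤ d_{a+1} + m`, coefficients `≥ 0`). -/
theorem stmt16 (n m : ℕ) (hpar : 2 ∣ m * (n - 1)) :
    Set.BijOn (shiftMap n m) {d : Fin n → ℤ | Monotone d} {d : Fin n → ℤ | G'Vertex n m d} ∧
    ∀ d e : Fin n → ℤ, Monotone d → Monotone e →
      (GEdge n m d e ↔ G'Edge n m (shiftMap n m d) (shiftMap n m e)) := by
  set S : Fin n → ℤ := fun a => ((m : ℤ) * ((n : ℤ) - 1 - 2 * (a.val : ℤ))) / 2 with hSdef
  have hdvd : ∀ a : Fin n, (2:ℤ) ∣ (m:ℤ) * ((n:ℤ) - 1 - 2*(a.val:ℤ)) := by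
    intro a
    have hn : 1 ≤ n := a.pos
    have h0 : (2:ℤ) ∣ (m:ℤ) * ((n:ℤ) - 1) := by
      have h := Int.natCast_dvd_natCast.mpr hpar
      push_cast [Nat.cast_sub hn] at h
      exact_mod_cast h
    have hr : (m:ℤ) * ((n:ℤ) - 1 - 2*(a.val:ℤ)) = (m:ℤ)*((n:ℤ)-1) - 2*((m:ℤ)*(a.val:ℤ)) := by
      ring
    rw [hr]
    exact dvd_sub h0 (dvd_mul_right 2 _)
  have hS : ∀ a : Fin n, 2 * S a = (m:ℤ) * ((n:ℤ) - 1 - 2*(a.val:ℤ)) :=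
    fun a => Int.mul_ediv_cancel' (hdvd a)
  have hSdiff : ∀ a b : Fin n, S a - S b = (m:ℤ) * ((b.val:ℤ) - (a.val:ℤ)) := by
    intro a b
    have h2 : 2 * (S a - S b) = 2 * ((m:ℤ) * ((b.val:ℤ) - (a.val:ℤ))) := by
      rw [mul_sub, hS a, hS b]; ring
    exact mul_left_cancel₀ two_ne_zero h2
  have shiftEq : ∀ (d : Fin n → ℤ) (a : Fin n), shiftMap n m d a = d a + S a := fun d a => rfl
  have vert : ∀ d : Fin n → ℤ, Monotone d ↔ G'Vertex n m (shiftMap n m d) := by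
    intro d
    constructor
    · intro hd a ha
      rw [shiftEq, shiftEq]
      have hm : d ⟨a, by omega⟩ ≤ d ⟨a+1, ha⟩ := hd (by simp [Fin.le_def])
      have hsd := hSdiff (⟨a, by omega⟩ : Fin n) (⟨a+1, ha⟩ : Fin n)
      simp only [Fin.val_mk] at hsd
      push_cast at hsd
      have : S (⟨a, by omega⟩ : Fin n) - S (⟨a+1, ha⟩ : Fin n) = (m:ℤ) := by
        rw [hsd]; ring
      linarith
    · intro hv
      apply mono_of_adj
      intro a ha
      have h := hv a ha
      rw [shiftEq, shiftEq] at h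
      have hsd := hSdiff (⟨a, by omega⟩ : Fin n) (⟨a+1, ha⟩ : Fin n)
      simp only [Fin.val_mk] at hsd
      push_cast at hsd
      have : S (⟨a, by omega⟩ : Fin n) - S (⟨a+1, ha⟩ : Fin n) = (m:ℤ) := by
        rw [hsd]; ring
      linarith
  constructor
  · refine ⟨fun d hd => (vert d).1 hd, ?_, ?_⟩
    · intro d _ e _ h
      funext a
      have := congrFun h a
      rw [shiftEq, shiftEq] at this
      linarith
    · intro e he
      refine ⟨fun a => e a - S a, ?_, ?_⟩
      · have hEq : shiftMap n m (fun a => e a - S a) = e := by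
          funext a; rw [shiftEq]; ring
        simp only [Set.mem_setOf_eq]
        apply (vert _).2
        rw [hEq]
        exact he
      · funext a; rw [shiftEq]; ring
  · intro d e _ _
    constructor
    · rintro ⟨σ, hσ, c, hc, heq⟩
      refine ⟨σ, hσ, fun a b => c a b + (m:ℤ), fun a b => by dsimp only; linarith [hc a b], fun a => ?_⟩
      have hA : ∑ s ∈ univ.filter (fun s : Fin n => s < a ∧ σ a < σ s), (c s a + (m:ℤ))
          = (∑ s ∈ univ.filter (fun s : Fin n => s < a ∧ σ a < σ s), c s a)
            + ((univ.filter (fun s : Fin n => s < a ∧ σ a < σ s)).card : ℤ) * m := by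
        rw [Finset.sum_add_distrib, Finset.sum_const, nsmul_eq_mul]
      have hB : ∑ t ∈ univ.filter (fun t : Fin n => a < t ∧ σ t < σ a), (c a t + (m:ℤ))
          = (∑ t ∈ univ.filter (fun t : Fin n => a < t ∧ σ t < σ a), c a t)
            + ((univ.filter (fun t : Fin n => a < t ∧ σ t < σ a)).card : ℤ) * m := by
        rw [Finset.sum_add_distrib, Finset.sum_const, nsmul_eq_mul]
      have hcount : ((univ.filter (fun s : Fin n => s < a ∧ σ a < σ s)).card : ℤ)
            + ((σ a).val : ℤ)
          = ((univ.filter (fun t : Fin n => a < t ∧ σ t < σ a)).card : ℤ) + (a.val : ℤ) := by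
        exact_mod_cast countKey n σ a
      have hsd := hSdiff (σ a) a
      rw [shiftEq, shiftEq, hA, hB, heq a]
      linear_combination (m:ℤ) * hcount - hsd
    · rintro ⟨σ, hσ, c, hc, heq⟩
      refine ⟨σ, hσ, fun a b => c a b - (m:ℤ), fun a b => by dsimp only; linarith [hc a b], fun a => ?_⟩
      have hA : ∑ s ∈ univ.filter (fun s : Fin n => s < a ∧ σ a < σ s), (c s a - (m:ℤ))
          = (∑ s ∈ univ.filter (fun s : Fin n => s < a ∧ σ a < σ s), c s a)
            - ((univ.filter (fun s : Fin n => s < a ∧ σ a < σ s)).card : ℤ) * m := by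
        rw [Finset.sum_sub_distrib, Finset.sum_const, nsmul_eq_mul]
      have hB : ∑ t ∈ univ.filter (fun t : Fin n => a < t ∧ σ t < σ a), (c a t - (m:ℤ))
          = (∑ t ∈ univ.filter (fun t : Fin n => a < t ∧ σ t < σ a), c a t)
            - ((univ.filter (fun t : Fin n => a < t ∧ σ t < σ a)).card : ℤ) * m := by
        rw [Finset.sum_sub_distrib, Finset.sum_const, nsmul_eq_mul]
      have hcount : ((univ.filter (fun s : Fin n => s < a ∧ σ a < σ s)).card : ℤ)
            + ((σ a).val : ℤ)
          = ((univ.filter (fun t : Fin n => a < t ∧ σ t < σ a)).card : ℤ) + (a.val : ℤ) := by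
        exact_mod_cast countKey n σ a
      have hsd := hSdiff (σ a) a
      have h := heq a
      rw [shiftEq, shiftEq] at h
      rw [hA, hB]
      linear_combination h + hsd - (m:ℤ) * hcount
end
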